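/- Let X and Y be normed vector lattices and let 1 ≤ p ≤ r < ∞. Suppose X and Y each satisfy an upper p-estimate with constant 1: for every finite family x_1, …, x_n of pairwise disjoint elements (|x_i| ∧ |x_j| = 0 for i ≠ j), ‖Σ_{i=1}^n x_i‖ ≤ (Σ_{i=1}^n ‖x_i‖^p)^{1/p}. Then the direct sum X ⊕_r Y, i.e. the product X × Y with coordinatewise order and norm ‖(x,y)‖ = (‖x‖^r + ‖y‖^r)^{1/r}, also satisfies an upper p-estimate with constant 1. -/

import Mathlib

/-- Triangle inequality for the `ℓ^s` norm on `ℝ²` applied to a sum of `n` vectors. -/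
lemma lp_two_triangle (s : ℝ) (hs : 1 ≤ s) {n : ℕ} (c d : Fin n → ℝ)
    (hc : ∀ i, 0 ≤ c i) (hd : ∀ i, 0 ≤ d i) :
    ((∑ i, c i) ^ s + (∑ i, d i) ^ s) ^ (1 / s) ≤ ∑ i, (c i ^ s + d i ^ s) ^ (1 / s) := by
  haveI : Fact (1 ≤ (ENNReal.ofReal s)) :=
    ⟨by rwa [← ENNReal.ofReal_one, ENNReal.ofReal_le_ofReal_iff (by linarith)]⟩
  set v : Fin n → PiLp (ENNReal.ofReal s) (fun _ : Fin 2 => ℝ) :=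
    fun i => WithLp.toLp _ (![c i, d i] : Fin 2 → ℝ) with hv
  have hst : (ENNReal.ofReal s).toReal = s := ENNReal.toReal_ofReal (by linarith)
  have h0 : 0 < (ENNReal.ofReal s).toReal := by rw [hst]; linarith
  have hnorm : ∀ i, ‖v i‖ = (c i ^ s + d i ^ s) ^ (1 / s) := by
    intro i
    rw [PiLp.norm_eq_sum h0, hst]
    have e0 : v i 0 = c i := rfl
    have e1 : v i 1 = d i := rfl
    rw [Fin.sum_univ_two, e0, e1, Real.norm_eq_abs, Real.norm_eq_abs,
      abs_of_nonneg (hc i), abs_of_nonneg (hd i), one_div]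
  have hsum : ‖∑ i, v i‖ = ((∑ i, c i) ^ s + (∑ i, d i) ^ s) ^ (1 / s) := by
    rw [PiLp.norm_eq_sum h0, hst]
    have h1 : (∑ i, v i) 0 = ∑ i, c i := by
      rw [WithLp.ofLp_sum, Finset.sum_apply]; exact Finset.sum_congr rfl fun i _ => rfl
    have h2 : (∑ i, v i) 1 = ∑ i, d i := by
      rw [WithLp.ofLp_sum, Finset.sum_apply]; exact Finset.sum_congr rfl fun i _ => rfl
    rw [Fin.sum_univ_two, h1, h2, Real.norm_eq_abs, Real.norm_eq_abs,
      abs_of_nonneg (Finset.sum_nonneg fun i _ => hc i),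
      abs_of_nonneg (Finset.sum_nonneg fun i _ => hd i)]
  calc ((∑ i, c i) ^ s + (∑ i, d i) ^ s) ^ (1 / s) = ‖∑ i, v i‖ := hsum.symm
    _ ≤ ∑ i, ‖v i‖ := norm_sum_le _ _
    _ = _ := by simp only [hnorm]

/-- If normed vector lattices `X` and `Y` both satisfy an upper `p`-estimate with
constant 1 and `1 ≤ p ≤ r < ∞`, then the direct sum `X ⊕_r Y` (the product with
coordinatewise order and norm `‖(x,y)‖ = (‖x‖^r + ‖y‖^r)^{1/r}`) also satisfies an
upper `p`-estimate with constant 1. -/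
theorem upper_p_estimate_direct_sum
    {X Y : Type*} [NormedAddCommGroup X] [Lattice X] [HasSolidNorm X] [IsOrderedAddMonoid X]
    [NormedAddCommGroup Y] [Lattice Y] [HasSolidNorm Y] [IsOrderedAddMonoid Y]
    [Module ℝ X] [Module ℝ Y]
    (p r : ℝ) (hp : 1 ≤ p) (hpr : p ≤ r)
    (hX : ∀ (n : ℕ) (x : Fin n → X), (∀ i j, i ≠ j → |x i| ⊓ |x j| = 0) →
      ‖∑ i, x i‖ ≤ (∑ i, ‖x i‖ ^ p) ^ (1 / p))
    (hY : ∀ (n : ℕ) (y : Fin n → Y), (∀ i j, i ≠ j → |y i| ⊓ |y j| = 0) →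
      ‖∑ i, y i‖ ≤ (∑ i, ‖y i‖ ^ p) ^ (1 / p)) :
    ∀ (n : ℕ) (z : Fin n → X × Y),
      (∀ i j, i ≠ j → |(z i).1| ⊓ |(z j).1| = 0 ∧ |(z i).2| ⊓ |(z j).2| = 0) →
      (‖(∑ i, z i).1‖ ^ r + ‖(∑ i, z i).2‖ ^ r) ^ (1 / r)
        ≤ (∑ i, ((‖(z i).1‖ ^ r + ‖(z i).2‖ ^ r) ^ (1 / r)) ^ p) ^ (1 / p) := by
  intro n z hz
  have hp0 : 0 < p := lt_of_lt_of_le one_pos hp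
  have hr0 : 0 < r := lt_of_lt_of_le hp0 hpr
  set a : Fin n → ℝ := fun i => ‖(z i).1‖ with haf
  set b : Fin n → ℝ := fun i => ‖(z i).2‖ with hbf
  have ha : ∀ i, 0 ≤ a i := fun i => norm_nonneg _
  have hb : ∀ i, 0 ≤ b i := fun i => norm_nonneg _
  have hA : ‖(∑ i, z i).1‖ ≤ (∑ i, a i ^ p) ^ (1 / p) := by
    have := hX n (fun i => (z i).1) (fun i j h => (hz i j h).1)
    simpa [Prod.fst_sum] using this
  have hB : ‖(∑ i, z i).2‖ ≤ (∑ i, b i ^ p) ^ (1 / p) := by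
    have := hY n (fun i => (z i).2) (fun i j h => (hz i j h).2)
    simpa [Prod.snd_sum] using this
  set s : ℝ := r / p with hsdef
  have hs : 1 ≤ s := (one_le_div hp0).mpr hpr
  set c : Fin n → ℝ := fun i => a i ^ p with hcf
  set d : Fin n → ℝ := fun i => b i ^ p with hdf
  have hc : ∀ i, 0 ≤ c i := fun i => Real.rpow_nonneg (ha i) _
  have hd : ∀ i, 0 ≤ d i := fun i => Real.rpow_nonneg (hb i) _
  have hC : 0 ≤ ∑ i, c i := Finset.sum_nonneg fun i _ => hc i
  have hD : 0 ≤ ∑ i, d i := Finset.sum_nonneg fun i _ => hd i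
  have key := lp_two_triangle s hs c d hc hd
  calc (‖(∑ i, z i).1‖ ^ r + ‖(∑ i, z i).2‖ ^ r) ^ (1 / r)
      ≤ (((∑ i, c i) ^ (1 / p)) ^ r + ((∑ i, d i) ^ (1 / p)) ^ r) ^ (1 / r) := by
        apply Real.rpow_le_rpow (by positivity)
          (add_le_add (Real.rpow_le_rpow (norm_nonneg _) hA hr0.le)
            (Real.rpow_le_rpow (norm_nonneg _) hB hr0.le)) (by positivity)
    _ = (((∑ i, c i) ^ s + (∑ i, d i) ^ s) ^ (1 / s)) ^ (1 / p) := by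
        have e1 : ((∑ i, c i) ^ (1 / p)) ^ r = (∑ i, c i) ^ s := by
          rw [← Real.rpow_mul hC]
          congr 1
          rw [hsdef]
          field_simp
        have e2 : ((∑ i, d i) ^ (1 / p)) ^ r = (∑ i, d i) ^ s := by
          rw [← Real.rpow_mul hD]
          congr 1
          rw [hsdef]
          field_simp
        rw [e1, e2, ← Real.rpow_mul (by positivity)]
        congr 1
        rw [hsdef]
        rw [one_div_div]
        field_simp
    _ ≤ (∑ i, (c i ^ s + d i ^ s) ^ (1 / s)) ^ (1 / p) :=
        Real.rpow_le_rpow (by positivity) key (by positivity)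
    _ = (∑ i, ((a i ^ r + b i ^ r) ^ (1 / r)) ^ p) ^ (1 / p) := by
        congr 1
        apply Finset.sum_congr rfl
        intro i _
        have h1 : c i ^ s = a i ^ r := by
          rw [hcf, ← Real.rpow_mul (ha i), hsdef]
          congr 1
          field_simp
        have h2 : d i ^ s = b i ^ r := by
          rw [hdf, ← Real.rpow_mul (hb i), hsdef]
          congr 1
          field_simp
        rw [h1, h2, ← Real.rpow_mul (by positivity)]
        congr 1
        rw [hsdef, one_div_div]
        field_simp
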